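/- The normalized solution set 𝓝 := {u(y) : y ∈ [1,∞]^d, min_j y_j = 1} is compact in H^1_0(Ω), and every u(y) ∈ 𝓝 satisfies the framing min_{1≤j≤d} ‖f‖_{H^{-1}(Ω_j)} ≤ ‖u(y)‖_{H^1_0} ≤ C_f, where ‖f‖_{H^{-1}(Ω_j)} denotes the norm of f as a continuous linear functional on H^1_0(Ω_j). -/

import Mathlib

open scoped BigOperators ENNReal InnerProductSpace
open Filter
open scoped Topology

noncomputable section

variable {V : Type*} [NormedAddCommGroup V] [InnerProductSpace ℝ V] [CompleteSpace V]

/-- The closed subspace `V_S` of functions whose gradient vanishes on `Ω_j` for all `j ∈ S`,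
encoded through the local Dirichlet forms `B j v w = ∫_{Ω_j} ∇v·∇w`. -/
def VS {d : ℕ} (B : Fin d → V →L[ℝ] V →L[ℝ] ℝ) (S : Set (Fin d)) : Submodule ℝ V where
  carrier := {v | ∀ j ∈ S, B j v = 0}
  add_mem' := by
    intro a b ha hb j hj
    simp only [Set.mem_setOf_eq] at *
    simp [map_add, ha j hj, hb j hj]
  zero_mem' := by intro j hj; simp
  smul_mem' := by
    intro c a ha j hj
    simp only [Set.mem_setOf_eq] at *
    simp [map_smul, ha j hj]

/-- The parametric energy bilinear form `a_y(v,w) = Σ_j y_j ∫_{Ω_j} ∇v·∇w`. -/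
def aForm {d : ℕ} (B : Fin d → V →L[ℝ] V →L[ℝ] ℝ) (y : Fin d → ℝ) (v w : V) : ℝ :=
  ∑ j, y j * B j v w

/-- The parametric energy norm `‖v‖_y`. -/
def eNorm {d : ℕ} (B : Fin d → V →L[ℝ] V →L[ℝ] ℝ) (y : Fin d → ℝ) (v : V) : ℝ :=
  Real.sqrt (aForm B y v v)

/-- `u` is the weak solution of the diffusion problem with (finite) parameter `y`. -/
def IsWeakSol {d : ℕ} (B : Fin d → V →L[ℝ] V →L[ℝ] ℝ) (f : V →L[ℝ] ℝ)
    (y : Fin d → ℝ) (u : V) : Prop :=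
  ∀ v : V, aForm B y u v = f v

/-- `u` is the (possibly stiff-limit) solution for an extended parameter `y ∈ (0,∞]^d`:
on the set `S = {j | y j = ∞}` of infinite entries, `u ∈ V_S` and `u` solves the
limit variational problem over `V_S`. -/
def IsSolE {d : ℕ} (B : Fin d → V →L[ℝ] V →L[ℝ] ℝ) (f : V →L[ℝ] ℝ)
    (y : Fin d → ℝ≥0∞) (u : V) : Prop :=
  u ∈ VS B {j | y j = ∞} ∧
  ∀ v ∈ VS B {j | y j = ∞}, ∑ j, (y j).toReal * B j u v = f v

/-- `p` is the `H^1_0`-orthogonal projection of `u` onto `K`. -/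
def IsOrthProj (K : Submodule ℝ V) (u p : V) : Prop :=
  p ∈ K ∧ ∀ w ∈ K, ⟪u - p, w⟫_ℝ = 0

/-- `p` is the Galerkin projection of `u` onto `K` for the energy inner product `⟨·,·⟩_y`. -/
def IsGalProj {d : ℕ} (B : Fin d → V →L[ℝ] V →L[ℝ] ℝ) (y : Fin d → ℝ)
    (K : Submodule ℝ V) (u p : V) : Prop :=
  p ∈ K ∧ ∀ w ∈ K, aForm B y (u - p) w = 0

/-- Galerkin projection for an extended parameter `y ∈ (0,∞]^d` (the energy inner
product being restricted to the finite components of `y`). -/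
def IsGalProjE {d : ℕ} (B : Fin d → V →L[ℝ] V →L[ℝ] ℝ) (y : Fin d → ℝ≥0∞)
    (K : Submodule ℝ V) (u p : V) : Prop :=
  p ∈ K ∧ ∀ w ∈ K, ∑ j, (y j).toReal * B j (u - p) w = 0

/-- The finite set of multi-indices `ν ∈ ℕ^d` of total degree `|ν| ≤ k`. -/
def mIdx (d k : ℕ) : Finset (Fin d → ℕ) :=
  (Fintype.piFinset fun _ : Fin d => Finset.range (k+1)).filter fun ν => ∑ j, ν j ≤ k

/-- The monomial `y^ν`. -/
def mono {d : ℕ} (y : Fin d → ℝ) (ν : Fin d → ℕ) : ℝ := ∏ j, y j ^ ν j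

namespace Statement3Aux

variable {V : Type*} [NormedAddCommGroup V] [InnerProductSpace ℝ V] [CompleteSpace V]
variable {d : ℕ} {B : Fin d → V →L[ℝ] V →L[ℝ] ℝ}

lemma mem_VS {S : Set (Fin d)} {v : V} : v ∈ VS B S ↔ ∀ j ∈ S, B j v = 0 := Iff.rfl

lemma cauchy_schwarz (hsymm : ∀ (j : Fin d) (v w : V), B j v w = B j w v)
    (hnonneg : ∀ (j : Fin d) (v : V), 0 ≤ B j v v) (j : Fin d) (u v : V) :
    (B j u v) ^ 2 ≤ B j u u * B j v v := by
  have h : ∀ t : ℝ, 0 ≤ (B j v v) * (t * t) + (2 * B j u v) * t + B j u u := by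
    intro t
    have h0 := hnonneg j (u + t • v)
    have hexp : B j (u + t • v) (u + t • v)
        = B j u u + t * B j u v + t * B j v u + t * t * B j v v := by
      simp only [map_add, map_smul, ContinuousLinearMap.add_apply,
        ContinuousLinearMap.smul_apply, smul_eq_mul]
      ring
    rw [hexp, hsymm j v u] at h0
    nlinarith [h0]
  have hdisc := discrim_le_zero h
  rw [discrim] at hdisc
  nlinarith [hdisc]

lemma B_diag_le (hnonneg : ∀ (j : Fin d) (v : V), 0 ≤ B j v v)
    (hsum : ∀ v w : V, ∑ j, B j v w = ⟪v, w⟫_ℝ) (j : Fin d) (v : V) :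
    B j v v ≤ ‖v‖ ^ 2 := by
  have h1 : B j v v ≤ ∑ i, B i v v :=
    Finset.single_le_sum (fun i _ => hnonneg i v) (Finset.mem_univ j)
  rw [hsum v v, real_inner_self_eq_norm_sq] at h1
  exact h1

lemma abs_B_le (hsymm : ∀ (j : Fin d) (v w : V), B j v w = B j w v)
    (hnonneg : ∀ (j : Fin d) (v : V), 0 ≤ B j v v)
    (hsum : ∀ v w : V, ∑ j, B j v w = ⟪v, w⟫_ℝ) (j : Fin d) (u v : V) :
    |B j u v| ≤ ‖u‖ * ‖v‖ := by
  have hcs := cauchy_schwarz hsymm hnonneg j u v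
  have h1 := B_diag_le hnonneg hsum j u
  have h2 := B_diag_le hnonneg hsum j v
  have h3 : (B j u v) ^ 2 ≤ (‖u‖ * ‖v‖) ^ 2 := by
    nlinarith [hnonneg j u, hnonneg j v, sq_nonneg ‖u‖, sq_nonneg ‖v‖]
  have h4 := Real.sqrt_le_sqrt h3
  rwa [Real.sqrt_sq_eq_abs, Real.sqrt_sq (by positivity)] at h4

lemma coercive_sum (hnonneg : ∀ (j : Fin d) (v : V), 0 ≤ B j v v)
    {y : Fin d → ℝ≥0∞} (hy : ∀ j, 1 ≤ y j) {x : V}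
    (hx : ∀ j, y j = ∞ → B j x = 0) :
    ∑ j, B j x x ≤ ∑ j, (y j).toReal * B j x x := by
  refine Finset.sum_le_sum fun j _ => ?_
  by_cases h : y j = ∞
  · simp [hx j h]
  · have h1 : (1 : ℝ) ≤ (y j).toReal := by
      have := ENNReal.toReal_mono h (hy j)
      simpa using this
    nlinarith [hnonneg j x]

lemma sol_bounds (hnonneg : ∀ (j : Fin d) (v : V), 0 ≤ B j v v)
    (hsum : ∀ v w : V, ∑ j, B j v w = ⟪v, w⟫_ℝ)
    {f : V →L[ℝ] ℝ} {y : Fin d → ℝ≥0∞} {u : V}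
    (hy : ∀ j, 1 ≤ y j) (hu : IsSolE B f y u) :
    ‖u‖ ^ 2 ≤ f u ∧ ‖u‖ ≤ ‖f‖ := by
  have hmem : ∀ j, y j = ∞ → B j u = 0 := fun j hj => mem_VS.mp hu.1 j hj
  have h1 : ‖u‖ ^ 2 = ∑ j, B j u u := by rw [hsum u u, real_inner_self_eq_norm_sq]
  have h2 : ∑ j, (y j).toReal * B j u u = f u := hu.2 u hu.1
  have h3 : ‖u‖ ^ 2 ≤ f u := by
    rw [h1, ← h2]; exact coercive_sum hnonneg hy hmem
  refine ⟨h3, ?_⟩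
  have h4 : f u ≤ ‖f‖ * ‖u‖ := by
    have := f.le_opNorm u
    have habs : f u ≤ ‖f u‖ := le_abs_self _
    linarith
  rcases eq_or_lt_of_le (norm_nonneg u) with h0 | h0
  · rw [← h0]; exact norm_nonneg f
  · nlinarith

end Statement3Aux

set_option maxHeartbeats 1000000
set_option synthInstance.maxHeartbeats 400000

/-- Lemma 2.3: the normalized solution set `𝓝` is compact and
every `u(y) ∈ 𝓝` satisfies `min_j ‖f‖_{H^{-1}(Ω_j)} ≤ ‖u(y)‖ ≤ C_f`. -/
theorem statement3
    {V : Type*} [NormedAddCommGroup V] [InnerProductSpace ℝ V] [CompleteSpace V]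
    {d : ℕ}
    (hd : 0 < d)
    (B : Fin d → V →L[ℝ] V →L[ℝ] ℝ)
    (hsymm : ∀ (j : Fin d) (v w : V), B j v w = B j w v)
    (hnonneg : ∀ (j : Fin d) (v : V), 0 ≤ B j v v)
    (hsum : ∀ v w : V, ∑ j, B j v w = ⟪v, w⟫_ℝ)
    (f : V →L[ℝ] ℝ)
    (Wloc : Fin d → Submodule ℝ V)
    (hWloc : ∀ j : Fin d, ∀ v ∈ Wloc j, ∀ i : Fin d, i ≠ j → B i v = 0)
 :
    IsCompact {u : V | ∃ y : Fin d → ℝ≥0∞, (∀ j, 1 ≤ y j) ∧ (∃ j, y j = 1) ∧ IsSolE B f y u} ∧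
    ∀ u ∈ {u : V | ∃ y : Fin d → ℝ≥0∞, (∀ j, 1 ≤ y j) ∧ (∃ j, y j = 1) ∧ IsSolE B f y u},
      (⨅ j : Fin d, ‖f.comp (Wloc j).subtypeL‖) ≤ ‖u‖ ∧ ‖u‖ ≤ ‖f‖ := by
  classical
  open Statement3Aux in
  set 𝒩 : Set V :=
    {u : V | ∃ y : Fin d → ℝ≥0∞, (∀ j, 1 ≤ y j) ∧ (∃ j, y j = 1) ∧ IsSolE B f y u} with h𝒩def
  have hbounds : ∀ u ∈ 𝒩,
      (⨅ j : Fin d, ‖f.comp (Wloc j).subtypeL‖) ≤ ‖u‖ ∧ ‖u‖ ≤ ‖f‖ := by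
    rintro u ⟨y, hy1, ⟨j0, hyj0⟩, hu⟩
    have hub := (Statement3Aux.sol_bounds hnonneg hsum hy1 hu).2
    refine ⟨?_, hub⟩
    haveI : Nonempty (Fin d) := ⟨⟨0, hd⟩⟩
    refine ciInf_le_of_le (Set.Finite.bddBelow (Set.finite_range _)) j0 ?_
    refine ContinuousLinearMap.opNorm_le_bound _ (norm_nonneg u) fun v => ?_
    have hvV : (v : V) ∈ VS B {j | y j = ∞} := by
      refine Statement3Aux.mem_VS.mpr fun i hi => ?_
      have hne : i ≠ j0 := by
        rintro rfl
        rw [Set.mem_setOf_eq, hyj0] at hi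
        simp at hi
      exact hWloc j0 v v.2 i hne
    have heq : f (v : V) = B j0 u (v : V) := by
      rw [← hu.2 (v : V) hvV]
      rw [Finset.sum_eq_single j0]
      · rw [hyj0]; simp
      · intro i _ hne
        have hBiv : B i (v : V) = 0 := hWloc j0 v v.2 i hne
        rw [hsymm i u (v : V), hBiv]
        simp
      · simp
    have habs := Statement3Aux.abs_B_le hsymm hnonneg hsum j0 u (v : V)
    calc ‖(f.comp (Wloc j0).subtypeL) v‖ = |B j0 u (v : V)| := by
          simp only [ContinuousLinearMap.comp_apply, Submodule.subtypeL_apply,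
            Real.norm_eq_abs, heq]
      _ ≤ ‖u‖ * ‖(v : V)‖ := habs
      _ = ‖u‖ * ‖v‖ := rfl
  refine ⟨?_, hbounds⟩
  rw [isCompact_iff_ultrafilter_le_nhds']
  intro 𝒰 hmem
  -- choose parameters
  have hsel : ∀ u : V, ∃ y : Fin d → ℝ≥0∞,
      u ∈ 𝒩 → ((∀ j, 1 ≤ y j) ∧ (∃ j, y j = 1) ∧ IsSolE B f y u) := by
    intro u
    by_cases hu : u ∈ 𝒩
    · obtain ⟨y, hy⟩ := hu
      exact ⟨y, fun _ => hy⟩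
    · exact ⟨1, fun h => absurd h hu⟩
  choose Y hY using hsel
  -- limit parameter
  obtain ⟨ystar, hystar⟩ : ∃ ystar, Tendsto Y 𝒰 (𝓝 ystar) := by
    rcases isCompact_univ.ultrafilter_le_nhds (𝒰.map Y)
      (le_principal_iff.mpr univ_mem) with ⟨ystar, _, h⟩
    exact ⟨ystar, h⟩
  have hco : ∀ j, Tendsto (fun u => Y u j) 𝒰 (𝓝 (ystar j)) :=
    fun j => ((continuous_apply j).tendsto ystar).comp hystar
  have hy1 : ∀ j, 1 ≤ ystar j := by
    intro j
    refine ge_of_tendsto (hco j) ?_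
    filter_upwards [hmem] with u hu using (hY u hu).1 j
  -- some coordinate is 1 in the limit
  obtain ⟨j0, hj0⟩ : ∃ j0 : Fin d, {u | u ∈ 𝒩 ∧ Y u j0 = 1} ∈ 𝒰 := by
    by_contra hcon
    push_neg at hcon
    have hall : ∀ᶠ u in (𝒰 : Filter V), ∀ j : Fin d, ¬(u ∈ 𝒩 ∧ Y u j = 1) := by
      rw [Filter.eventually_all]
      intro j
      have := (Ultrafilter.compl_mem_iff_notMem).mpr (hcon j)
      simpa only [Filter.Eventually, Ultrafilter.mem_coe, Set.compl_setOf, not_and] using this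
    obtain ⟨u, hu1, hu2⟩ := Filter.nonempty_of_mem (Filter.inter_mem hall hmem)
    obtain ⟨j, hj⟩ := (hY u hu2).2.1
    exact hu1 j ⟨hu2, hj⟩
  have hyj0 : ystar j0 = 1 := by
    have h2 : (fun u => Y u j0) =ᶠ[↑𝒰] fun _ => (1 : ℝ≥0∞) := by
      filter_upwards [hj0] with u hu using hu.2
    exact tendsto_nhds_unique ((hco j0).congr' h2) tendsto_const_nhds
  -- eventually non-stiff coordinates stay finite
  have hSsub : ∀ᶠ u in (𝒰 : Filter V), ∀ j, ystar j ≠ ∞ → Y u j ≠ ∞ := by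
    rw [Filter.eventually_all]
    intro j
    by_cases hj : ystar j = ∞
    · exact Filter.Eventually.of_forall fun u h => absurd hj h
    · filter_upwards [(hco j).eventually (eventually_ne_nhds hj)] with u h _ using h
  -- weak limit via Banach-Alaoglu
  have hnorm_le : ∀ᶠ u in (𝒰 : Filter V), ‖u‖ ≤ ‖f‖ := by
    filter_upwards [hmem] with u hu
    exact (Statement3Aux.sol_bounds hnonneg hsum (hY u hu).1 (hY u hu).2.2).2
  set T : V → WeakDual ℝ V := fun u => StrongDual.toWeakDual (innerSL ℝ u) with hT
  have hK : IsCompact (WeakDual.toStrongDual ⁻¹'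
      Metric.closedBall (0 : StrongDual ℝ V) ‖f‖) :=
    WeakDual.isCompact_closedBall (𝕜 := ℝ) (E := V) 0 ‖f‖
  have hTK : T ⁻¹' (WeakDual.toStrongDual ⁻¹'
      Metric.closedBall (0 : StrongDual ℝ V) ‖f‖) ∈ 𝒰 := by
    filter_upwards [hnorm_le] with u hu
    simp only [hT, Set.mem_preimage, Metric.mem_closedBall, dist_zero_right]
    show ‖innerSL ℝ u‖ ≤ ‖f‖
    rw [innerSL_apply_norm]
    exact hu
  obtain ⟨g, hgK, hg⟩ := hK.ultrafilter_le_nhds' (𝒰.map T) hTK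
  have hgT : Tendsto T 𝒰 (𝓝 g) := hg
  set w : V := (InnerProductSpace.toDual ℝ V).symm (WeakDual.toStrongDual g) with hw
  have hval : ∀ v : V, Tendsto (fun u => ⟪u, v⟫_ℝ) 𝒰 (𝓝 ⟪w, v⟫_ℝ) := by
    intro v
    have h1 : Tendsto (fun u => T u v) 𝒰 (𝓝 (g v)) :=
      ((WeakDual.eval_continuous v).tendsto g).comp hgT
    have h3 : (g v : ℝ) = ⟪w, v⟫_ℝ := (InnerProductSpace.toDual_symm_apply).symm
    rw [← h3]
    exact h1.congr fun u => rfl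
  have hweak : ∀ ψ : V →L[ℝ] ℝ, Tendsto (fun u => ψ u) 𝒰 (𝓝 (ψ w)) := by
    intro ψ
    have hzz : ∀ x : V, ψ x = ⟪x, (InnerProductSpace.toDual ℝ V).symm ψ⟫_ℝ := by
      intro x
      rw [real_inner_comm]
      exact (InnerProductSpace.toDual_symm_apply).symm
    have h := hval ((InnerProductSpace.toDual ℝ V).symm ψ)
    rw [← hzz w] at h
    exact h.congr fun u => (hzz u).symm
  -- stiff coordinates: diagonal energies vanish
  have hdiag0 : ∀ j, ystar j = ∞ → Tendsto (fun u => B j u u) 𝒰 (𝓝 0) := by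
    intro j hj
    rw [Metric.tendsto_nhds]
    intro ε hε
    have hIoi : ∀ᶠ z in 𝓝 (ystar j), ENNReal.ofReal (‖f‖ ^ 2 / ε) < z := by
      rw [hj]
      exact eventually_gt_nhds ENNReal.ofReal_lt_top
    filter_upwards [hmem, (hco j).eventually hIoi] with u hu hlt
    rw [Real.dist_eq]
    have hY' := hY u hu
    by_cases hju : Y u j = ∞
    · have h0 : B j u = 0 := Statement3Aux.mem_VS.mp hY'.2.2.1 j hju
      simp [h0, hε]
    · have htR : ‖f‖ ^ 2 / ε < (Y u j).toReal :=
        (ENNReal.ofReal_lt_iff_lt_toReal (by positivity) hju).mp hlt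
      have hsumle : (Y u j).toReal * B j u u ≤ f u := by
        rw [← hY'.2.2.2 u hY'.2.2.1]
        exact Finset.single_le_sum
          (fun i _ => mul_nonneg ENNReal.toReal_nonneg (hnonneg i u)) (Finset.mem_univ j)
      have hfF : f u ≤ ‖f‖ ^ 2 := by
        have h1 : f u ≤ ‖f u‖ := le_abs_self _
        have h2 := f.le_opNorm u
        have h3 := (Statement3Aux.sol_bounds hnonneg hsum hY'.1 hY'.2.2).2
        nlinarith [norm_nonneg f]
      have htpos : 0 < (Y u j).toReal := lt_of_le_of_lt (by positivity) htR
      have h6 : ‖f‖ ^ 2 < (Y u j).toReal * ε := by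
        rw [div_lt_iff₀ hε] at htR
        linarith
      have hb0 : 0 ≤ B j u u := hnonneg j u
      rw [sub_zero, abs_of_nonneg hb0]
      nlinarith [hsumle, hfF, htpos]
  -- stiff coordinates: off-diagonal terms vanish
  have hoff : ∀ j, ystar j = ∞ → ∀ v : V, Tendsto (fun u => B j u v) 𝒰 (𝓝 0) := by
    intro j hj v
    apply squeeze_zero_norm (a := fun u => Real.sqrt (B j u u) * ‖v‖)
    · intro u
      have hcs := Statement3Aux.cauchy_schwarz hsymm hnonneg j u v
      have hd2 := Statement3Aux.B_diag_le hnonneg hsum j v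
      have h2 : (B j u v) ^ 2 ≤ B j u u * ‖v‖ ^ 2 := by
        nlinarith [hnonneg j u, hnonneg j v]
      calc ‖B j u v‖ = Real.sqrt ((B j u v) ^ 2) := by
            rw [Real.sqrt_sq_eq_abs, Real.norm_eq_abs]
        _ ≤ Real.sqrt (B j u u * ‖v‖ ^ 2) := Real.sqrt_le_sqrt h2
        _ = Real.sqrt (B j u u) * ‖v‖ := by
            rw [Real.sqrt_mul (hnonneg j u), Real.sqrt_sq (norm_nonneg v)]
    · have hs : Tendsto (fun u => Real.sqrt (B j u u)) 𝒰 (𝓝 0) := by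
        have := (Real.continuous_sqrt.tendsto 0).comp (hdiag0 j hj)
        simpa [Function.comp_def, Real.sqrt_zero] using this
      simpa using hs.mul_const ‖v‖
  -- the weak limit lies in the stiff subspace
  have hwmemS : w ∈ VS B {j | ystar j = ∞} := by
    refine Statement3Aux.mem_VS.mpr fun j hj => ?_
    apply ContinuousLinearMap.ext
    intro v
    have h2 : Tendsto (fun u => B j u v) 𝒰 (𝓝 (B j w v)) := by
      have := hweak ((B j).flip v)
      simpa using this
    have := tendsto_nhds_unique h2 (hoff j hj v)
    simpa using this
  -- per-term convergence of the weighted forms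
  have hterm : ∀ v : V, v ∈ VS B {j | ystar j = ∞} → ∀ j : Fin d,
      Tendsto (fun u => (Y u j).toReal * B j u v) 𝒰
        (𝓝 ((ystar j).toReal * B j w v)) := by
    intro v hv j
    by_cases hj : ystar j = ∞
    · have hBv : B j v = 0 := Statement3Aux.mem_VS.mp hv j hj
      have hz : ∀ x : V, B j x v = 0 := fun x => by
        rw [hsymm j x v, hBv]; simp
      have h0 : ((ystar j).toReal * B j w v) = 0 := by rw [hz w, mul_zero]
      rw [h0]
      exact tendsto_const_nhds.congr fun u => by rw [hz u, mul_zero]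
    · have h1 : Tendsto (fun u => (Y u j).toReal) 𝒰 (𝓝 (ystar j).toReal) :=
        (ENNReal.tendsto_toReal hj).comp (hco j)
      have h2 : Tendsto (fun u => B j u v) 𝒰 (𝓝 (B j w v)) := by
        have := hweak ((B j).flip v)
        simpa using this
      exact h1.mul h2
  -- the limit equation for w
  have hweq : ∀ v ∈ VS B {j | ystar j = ∞},
      ∑ j, (ystar j).toReal * B j w v = f v := by
    intro v hv
    have h1 : Tendsto (fun u => ∑ j, (Y u j).toReal * B j u v) 𝒰
        (𝓝 (∑ j, (ystar j).toReal * B j w v)) :=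
      tendsto_finset_sum _ (fun j _ => hterm v hv j)
    have h2 : (fun u => ∑ j, (Y u j).toReal * B j u v) =ᶠ[↑𝒰] fun _ => f v := by
      filter_upwards [hmem, hSsub] with u hu hsub
      have hvmem : v ∈ VS B {j | Y u j = ∞} := by
        refine Statement3Aux.mem_VS.mpr fun i hi => ?_
        refine Statement3Aux.mem_VS.mp hv i ?_
        by_contra hne
        exact (hsub i hne) hi
      exact (hY u hu).2.2.2 v hvmem
    exact tendsto_nhds_unique (h1.congr' h2) tendsto_const_nhds
  have hwsol : IsSolE B f ystar w := ⟨hwmemS, hweq⟩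
  have hwmem𝒩 : w ∈ 𝒩 := ⟨ystar, hy1, ⟨j0, hyj0⟩, hwsol⟩
  -- strong convergence
  have hterm3 : Tendsto (fun u => ∑ j, (Y u j).toReal * B j w w) 𝒰 (𝓝 (f w)) := by
    have h1 : ∀ j : Fin d, Tendsto (fun u => (Y u j).toReal * B j w w) 𝒰
        (𝓝 ((ystar j).toReal * B j w w)) := by
      intro j
      by_cases hj : ystar j = ∞
      · have hBw : B j w = 0 := Statement3Aux.mem_VS.mp hwmemS j hj
        have hz : B j w w = 0 := by rw [hBw]; simp
        simp only [hz, mul_zero]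
        exact tendsto_const_nhds
      · exact ((ENNReal.tendsto_toReal hj).comp (hco j)).mul_const _
    have h2 := tendsto_finset_sum Finset.univ (fun j _ => h1 j)
    rwa [hweq w hwmemS] at h2
  have hQ : Tendsto (fun u => f u - 2 * f w + ∑ j, (Y u j).toReal * B j w w)
      𝒰 (𝓝 0) := by
    have h1 := ((hweak f).sub_const (2 * f w)).add hterm3
    have h2 : f w - 2 * f w + f w = 0 := by ring
    rwa [h2] at h1
  have hsq : ∀ᶠ u in (𝒰 : Filter V),
      ‖u - w‖ ^ 2 ≤ f u - 2 * f w + ∑ j, (Y u j).toReal * B j w w := by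
    filter_upwards [hmem, hSsub] with u hu hsub
    have hY' := hY u hu
    have hSol := hY'.2.2
    have hwVu : w ∈ VS B {j | Y u j = ∞} := by
      refine Statement3Aux.mem_VS.mpr fun i hi => ?_
      refine Statement3Aux.mem_VS.mp hwmemS i ?_
      by_contra hne
      exact (hsub i hne) hi
    have hx : ∀ jj, Y u jj = ∞ → B jj (u - w) = 0 := by
      intro jj hjj
      have h1 : B jj u = 0 := Statement3Aux.mem_VS.mp hSol.1 jj hjj
      have h2 : B jj w = 0 := Statement3Aux.mem_VS.mp hwVu jj hjj
      rw [map_sub, h1, h2, sub_zero]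
    have hco' := Statement3Aux.coercive_sum hnonneg hY'.1 hx
    have hn : ‖u - w‖ ^ 2 = ∑ j, B j (u - w) (u - w) := by
      rw [← real_inner_self_eq_norm_sq, ← hsum]
    have hexp : ∀ j, (Y u j).toReal * B j (u - w) (u - w)
        = (Y u j).toReal * B j u u - 2 * ((Y u j).toReal * B j u w)
          + (Y u j).toReal * B j w w := by
      intro j
      have hB : B j (u - w) (u - w) = B j u u - 2 * B j u w + B j w w := by
        simp only [map_sub, ContinuousLinearMap.sub_apply]
        rw [hsymm j w u]; ring
      rw [hB]; ring
    have hsum2 : ∑ j, (Y u j).toReal * B j (u - w) (u - w)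
        = (∑ j, (Y u j).toReal * B j u u)
          - 2 * (∑ j, (Y u j).toReal * B j u w)
          + ∑ j, (Y u j).toReal * B j w w := by
      rw [Finset.mul_sum, ← Finset.sum_sub_distrib, ← Finset.sum_add_distrib]
      exact Finset.sum_congr rfl fun j _ => hexp j
    have heqU : ∑ j, (Y u j).toReal * B j u u = f u := hSol.2 u hSol.1
    have heqW : ∑ j, (Y u j).toReal * B j u w = f w := hSol.2 w hwVu
    calc ‖u - w‖ ^ 2 = ∑ j, B j (u - w) (u - w) := hn
      _ ≤ ∑ j, (Y u j).toReal * B j (u - w) (u - w) := hco'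
      _ = f u - 2 * f w + ∑ j, (Y u j).toReal * B j w w := by
          rw [hsum2, heqU, heqW]
  have hlim2 : Tendsto (fun u => ‖u - w‖ ^ 2) 𝒰 (𝓝 0) :=
    squeeze_zero' (Filter.Eventually.of_forall fun u => by positivity) hsq hQ
  have hlim : Tendsto (fun u => ‖u - w‖) 𝒰 (𝓝 0) := by
    have h := (Real.continuous_sqrt.tendsto 0).comp hlim2
    simp only [Real.sqrt_zero] at h
    exact h.congr fun u => Real.sqrt_sq (norm_nonneg _)
  have hfinal : Tendsto (fun u : V => u) 𝒰 (𝓝 w) := by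
    rw [tendsto_iff_norm_sub_tendsto_zero]
    exact hlim
  exact ⟨w, hwmem𝒩, fun s hs => hfinal hs⟩

end
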